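/- Let θ ∈ (0, π/2), λ = cot(θ/2), λ' = cot(π/4 − θ/2), and let φ : ℂ ∖ {i} → ℂ be the Möbius transformation φ(z) = (1 − i z)/(z − i). Then φ(iλ) = −iλ', φ(−iλ) = −i/λ', φ(i/λ) = iλ', and φ(−i/λ) = i/λ'. In particular, φ maps the set {iλ, −iλ, i/λ, −i/λ} bijectively onto the set {iλ', −iλ', i/λ', −i/λ'}. -/

import Mathlib

open Real Complex

lemma phi_vals (A B : ℂ) (h1 : A - 1 ≠ 0) (h2 : A + 1 ≠ 0) (h0 : A ≠ 0) (h0' : B ≠ 0)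
    (hB : B = (A + 1) / (A - 1)) :
    (1 - I * (I * A)) / (I * A - I) = -(I * B) ∧
    (1 - I * (-(I * A))) / (-(I * A) - I) = -(I / B) ∧
    (1 - I * (I / A)) / (I / A - I) = I * B ∧
    (1 - I * (-(I / A))) / (-(I / A) - I) = I / B := by
  have hB0 : A + 1 = B * (A - 1) := by rw [hB]; field_simp
  have hd1 : I * A - I ≠ 0 := by
    intro h; apply h1
    have : I * (A - 1) = 0 := by linear_combination h
    simpa [Complex.I_ne_zero] using this
  have hd2 : -(I * A) - I ≠ 0 := by
    intro h; apply h2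
    have : I * (A + 1) = 0 := by linear_combination -h
    simpa [Complex.I_ne_zero] using this
  have hd3 : I / A - I ≠ 0 := by
    intro h; apply h1
    rw [div_sub' h0, div_eq_zero_iff] at h
    rcases h with h | h
    · have : I * (1 - A) = 0 := by linear_combination h
      have := (mul_eq_zero.1 this).resolve_left Complex.I_ne_zero
      linear_combination -this
    · exact absurd h h0
  have hd4 : -(I / A) - I ≠ 0 := by
    intro h; apply h2
    have h' : I / A + I = 0 := by linear_combination -h
    rw [div_add' (hc := h0), div_eq_zero_iff] at h'
    rcases h' with h' | h'
    · have : I * (1 + A) = 0 := by linear_combination h'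
      have := (mul_eq_zero.1 this).resolve_left Complex.I_ne_zero
      linear_combination this
    · exact absurd h' h0
  refine ⟨?_, ?_, ?_, ?_⟩
  · rw [div_eq_iff hd1]
    linear_combination (A*B - A - B) * Complex.I_sq + hB0
  · rw [div_eq_iff hd2]
    field_simp [h0']
    linear_combination (A*B - A - 1) * Complex.I_sq + hB0
  · rw [div_eq_iff hd3]
    field_simp [h0]
    linear_combination (A*B - B - 1) * Complex.I_sq + hB0
  · rw [div_eq_iff hd4]
    field_simp [h0, h0']
    linear_combination (A + 1 + B) * Complex.I_sq - hB0

/-- The Möbius transformation `φ(z) = (1 − iz)/(z − i)` maps the branch points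
`±iλ, ±i/λ` of `Σ_θ` (with `λ = cot(θ/2)`) bijectively onto the branch points
`±iλ', ±i/λ'` of `Σ_{π/2−θ}` (with `λ' = cot(π/4 − θ/2)`). -/
theorem mobius_maps_branch_points
    (θ : ℝ) (hθ : θ ∈ Set.Ioo 0 (π / 2)) :
    let φ : ℂ → ℂ := fun z => (1 - I * z) / (z - I)
    let lam : ℂ := (Real.cot (θ / 2) : ℂ)
    let lam' : ℂ := (Real.cot (π / 4 - θ / 2) : ℂ)
    φ (I * lam) = -(I * lam') ∧
    φ (-(I * lam)) = -(I / lam') ∧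
    φ (I / lam) = I * lam' ∧
    φ (-(I / lam)) = I / lam' ∧
    Set.BijOn φ {I * lam, -(I * lam), I / lam, -(I / lam)}
      {I * lam', -(I * lam'), I / lam', -(I / lam')} := by
  intro φ lam lam'
  obtain ⟨hθ0, hθ1⟩ := hθ
  set t := θ / 2 with ht
  have ht0 : 0 < t := by positivity
  have ht1 : t < π / 4 := by rw [ht]; linarith
  have hs2 : (0:ℝ) < Real.sqrt 2 := Real.sqrt_pos.2 (by norm_num)
  -- positivity and comparison facts for sin/cos
  have hsin : 0 < Real.sin t := Real.sin_pos_of_pos_of_lt_pi ht0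
    (lt_trans ht1 (by linarith [Real.pi_pos]))
  have hcs : Real.sin t < Real.cos t := by
    have h := Real.sin_pos_of_pos_of_lt_pi (x := π / 4 - t) (by linarith)
      (by linarith [Real.pi_pos])
    rw [Real.sin_sub, Real.sin_pi_div_four, Real.cos_pi_div_four] at h
    nlinarith
  have hc1 : 1 < Real.cot t := by
    rw [Real.cot_eq_cos_div_sin, lt_div_iff₀ hsin]; linarith
  have ht0' : 0 < π / 4 - t := by linarith
  have hsin' : 0 < Real.sin (π / 4 - t) := Real.sin_pos_of_pos_of_lt_pi ht0'
    (by linarith [Real.pi_pos])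
  have hcs' : Real.sin (π / 4 - t) < Real.cos (π / 4 - t) := by
    have h := Real.sin_pos_of_pos_of_lt_pi (x := π / 4 - (π / 4 - t)) (by linarith)
      (by linarith [Real.pi_pos])
    rw [Real.sin_sub, Real.sin_pi_div_four, Real.cos_pi_div_four] at h
    nlinarith
  have hc1' : 1 < Real.cot (π / 4 - t) := by
    rw [Real.cot_eq_cos_div_sin, lt_div_iff₀ hsin']; linarith
  set a : ℝ := Real.cot t with ha
  set b : ℝ := Real.cot (π / 4 - t) with hb
  -- key real identity: b = (a + 1)/(a - 1)
  have hkey : b = (a + 1) / (a - 1) := by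
    rw [hb, ha, Real.cot_eq_cos_div_sin, Real.cot_eq_cos_div_sin, Real.cos_sub, Real.sin_sub,
      Real.sin_pi_div_four, Real.cos_pi_div_four]
    have hden : Real.cos t / Real.sin t - 1 ≠ 0 := by
      rw [sub_ne_zero]
      intro h
      rw [div_eq_one_iff_eq hsin.ne'] at h
      linarith
    rw [div_eq_div_iff (by nlinarith) hden]
    field_simp
  have hkey' : a = (b + 1) / (b - 1) := by
    rw [hkey]
    have h1 : a - 1 ≠ 0 := by intro h; nlinarith
    field_simp
    ring
  -- cast nonvanishing facts to ℂ
  have hA1 : lam - 1 ≠ 0 := sub_ne_zero.2 (by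
    show (a : ℂ) ≠ 1; exact_mod_cast (by linarith : a ≠ 1))
  have hA2 : lam + 1 ≠ 0 := by
    intro h
    have : (a : ℂ) = ((-1 : ℝ) : ℂ) := by push_cast; linear_combination (h : lam + 1 = 0)
    exact absurd (by exact_mod_cast this : a = -1) (by linarith)
  have hA0 : lam ≠ 0 := by
    show (a : ℂ) ≠ 0; exact_mod_cast (by linarith : a ≠ 0)
  have hB1 : lam' - 1 ≠ 0 := sub_ne_zero.2 (by
    show (b : ℂ) ≠ 1; exact_mod_cast (by linarith : b ≠ 1))
  have hB2 : lam' + 1 ≠ 0 := by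
    intro h
    have : (b : ℂ) = ((-1 : ℝ) : ℂ) := by push_cast; linear_combination (h : lam' + 1 = 0)
    exact absurd (by exact_mod_cast this : b = -1) (by linarith)
  have hB0 : lam' ≠ 0 := by
    show (b : ℂ) ≠ 0; exact_mod_cast (by linarith : b ≠ 0)
  have hBc : lam' = (lam + 1) / (lam - 1) := by
    show (b : ℂ) = _
    rw [hkey]; push_cast; ring
  have hAc : lam = (lam' + 1) / (lam' - 1) := by
    show (a : ℂ) = _
    rw [hkey']; push_cast; ring
  obtain ⟨e1, e2, e3, e4⟩ := phi_vals lam lam' hA1 hA2 hA0 hB0 hBc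
  obtain ⟨f1, f2, f3, f4⟩ := phi_vals lam' lam hB1 hB2 hB0 hA0 hAc
  have he1 : φ (I * lam) = -(I * lam') := e1
  have he2 : φ (-(I * lam)) = -(I / lam') := e2
  have he3 : φ (I / lam) = I * lam' := e3
  have he4 : φ (-(I / lam)) = I / lam' := e4
  refine ⟨he1, he2, he3, he4, ?_, ?_, ?_⟩
  · -- MapsTo
    rintro x (rfl | rfl | rfl | rfl) <;>
      simp [he1, he2, he3, he4]
  · -- InjOn via left inverse ψ(w) = -φ(-w)
    have hf1 : φ (I * lam') = -(I * lam) := f1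
    have hf2 : φ (-(I * lam')) = -(I / lam) := f2
    have hf3 : φ (I / lam') = I * lam := f3
    have hf4 : φ (-(I / lam')) = I / lam := f4
    have hψ : Set.LeftInvOn (fun w => -φ (-w)) φ {I * lam, -(I * lam), I / lam, -(I / lam)} := by
      rintro x (rfl | rfl | rfl | rfl) <;>
        simp only [he1, he2, he3, he4, neg_neg, hf1, hf2, hf3, hf4]
    exact hψ.injOn
  · -- SurjOn
    rintro y (rfl | rfl | rfl | rfl)
    · exact ⟨I / lam, by simp, he3⟩
    · exact ⟨I * lam, by simp, he1⟩
    · exact ⟨-(I / lam), by simp, he4⟩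
    · exact ⟨-(I * lam), by simp, he2⟩
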